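/- For every real α ≥ 1 one has Γ(α+1)·(2/j_{α+1})^α·J_α(j_{α+1}) ≥ Γ(α)·(2/j_α)^{α−1}·J_{α−1}(j_α); that is, writing Ω_α(t) = Γ(α+1)·(2/t)^α·J_α(t) for t > 0, the global minimum of Ω_α, which is attained at t = j_{α+1}, is at least the global minimum of Ω_{α−1}, which is attained at t = j_α. -/

import Mathlib

/-- The Bessel function of the first kind of order `ν`,
`J_ν(t) = Σ_{m=0}^∞ (-1)^m / (m!·Γ(m+ν+1)) · (t/2)^{2m+ν}` (for `t > 0`,
using real powers). -/
noncomputable def besselJ (ν : ℝ) (t : ℝ) : ℝ :=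
  ∑' m : ℕ, ((-1 : ℝ) ^ m / ((Nat.factorial m) * Real.Gamma ((m : ℝ) + ν + 1))) *
    (t / 2) ^ (2 * (m : ℝ) + ν)

namespace BesselAux

noncomputable def c (ν : ℝ) (m : ℕ) : ℝ :=
  (-1 : ℝ) ^ m / ((Nat.factorial m) * Real.Gamma ((m : ℝ) + ν + 1))

noncomputable def H (ν : ℝ) (x : ℝ) : ℝ := ∑' m : ℕ, c ν m * x ^ m

lemma gamma_pos {ν : ℝ} (hν : 0 ≤ ν) (m : ℕ) : 0 < Real.Gamma ((m : ℝ) + ν + 1) :=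
  Real.Gamma_pos_of_pos (by positivity)

lemma factorial_le_gamma {ν : ℝ} (hν : 0 ≤ ν) (m : ℕ) :
    (m.factorial : ℝ) * Real.Gamma (ν + 1) ≤ Real.Gamma ((m : ℝ) + ν + 1) := by
  induction m with
  | zero => simp
  | succ n ih =>
    have h1 : ((n : ℝ) + ν + 1) ≠ 0 := by positivity
    have hg : Real.Gamma (((n + 1 : ℕ) : ℝ) + ν + 1)
        = ((n : ℝ) + ν + 1) * Real.Gamma ((n : ℝ) + ν + 1) := by
      have : (((n + 1 : ℕ) : ℝ) + ν + 1) = ((n : ℝ) + ν + 1) + 1 := by push_cast; ring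
      rw [this, Real.Gamma_add_one h1]
    rw [hg]
    have hfl : ((Nat.factorial (n + 1) : ℝ)) = ((n : ℝ) + 1) * (Nat.factorial n : ℝ) := by
      push_cast [Nat.factorial_succ]; ring
    rw [hfl]
    have h2 : ((n : ℝ) + 1) ≤ (n : ℝ) + ν + 1 := by linarith
    have h3 : (0 : ℝ) ≤ (Nat.factorial n : ℝ) * Real.Gamma (ν + 1) := by
      have := Real.Gamma_pos_of_pos (show (0:ℝ) < ν + 1 by linarith)
      positivity
    calc ((n : ℝ) + 1) * ((Nat.factorial n : ℝ)) * Real.Gamma (ν + 1)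
        = ((n : ℝ) + 1) * ((Nat.factorial n : ℝ) * Real.Gamma (ν + 1)) := by ring
      _ ≤ ((n : ℝ) + ν + 1) * ((Nat.factorial n : ℝ) * Real.Gamma (ν + 1)) := by
          exact mul_le_mul_of_nonneg_right h2 h3
      _ ≤ ((n : ℝ) + ν + 1) * Real.Gamma ((n : ℝ) + ν + 1) := by
          exact mul_le_mul_of_nonneg_left ih (by positivity)

lemma abs_c_le {ν : ℝ} (hν : 0 ≤ ν) (m : ℕ) :
    |c ν m| ≤ (1 / Real.Gamma (ν + 1)) / (Nat.factorial m : ℝ) := by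
  have hΓ := gamma_pos hν m
  have hΓν := Real.Gamma_pos_of_pos (show (0:ℝ) < ν + 1 by linarith)
  have hf : (0 : ℝ) < (Nat.factorial m : ℝ) := by positivity
  have habs : |c ν m| = 1 / ((Nat.factorial m : ℝ) * Real.Gamma ((m : ℝ) + ν + 1)) := by
    rw [c, abs_div, abs_pow, abs_neg, abs_one, one_pow]
    rw [abs_of_pos (by positivity)]
  rw [habs]
  rw [div_div]
  apply one_div_le_one_div_of_le (by positivity)
  calc Real.Gamma (ν + 1) * (Nat.factorial m : ℝ)
      = (Nat.factorial m : ℝ) * Real.Gamma (ν + 1) := by ring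
    _ ≤ Real.Gamma ((m : ℝ) + ν + 1) := factorial_le_gamma hν m
    _ ≤ (Nat.factorial m : ℝ) * Real.Gamma ((m : ℝ) + ν + 1) := by
        nlinarith [Nat.one_le_iff_ne_zero.mpr (Nat.factorial_ne_zero m),
          (show (1:ℝ) ≤ (Nat.factorial m : ℝ) from by exact_mod_cast Nat.one_le_iff_ne_zero.mpr (Nat.factorial_ne_zero m))]


lemma summable_H {ν : ℝ} (hν : 0 ≤ ν) (x : ℝ) : Summable (fun m : ℕ => c ν m * x ^ m) := by
  apply Summable.of_norm_bounded (g := fun m : ℕ => (1 / Real.Gamma (ν + 1)) * (|x| ^ m / (Nat.factorial m : ℝ)))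
  · exact (Real.summable_pow_div_factorial |x|).mul_left _
  · intro m
    rw [norm_mul, norm_pow, Real.norm_eq_abs, Real.norm_eq_abs]
    calc |c ν m| * |x| ^ m ≤ ((1 / Real.Gamma (ν + 1)) / (Nat.factorial m : ℝ)) * |x| ^ m := by
          exact mul_le_mul_of_nonneg_right (abs_c_le hν m) (by positivity)
      _ = (1 / Real.Gamma (ν + 1)) * (|x| ^ m / (Nat.factorial m : ℝ)) := by ring

lemma m_le_two_pow (m : ℕ) : (m : ℝ) ≤ 2 ^ m := by
  exact_mod_cast (Nat.lt_two_pow_self (n := m)).le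

lemma summable_mH {ν : ℝ} (hν : 0 ≤ ν) {R : ℝ} (hR : 1 ≤ R) :
    Summable (fun m : ℕ => (1 / Real.Gamma (ν + 1)) * ((2 * R) ^ m / (Nat.factorial m : ℝ))) :=
  (Real.summable_pow_div_factorial (2 * R)).mul_left _

lemma deriv_term_bound {ν : ℝ} (hν : 0 ≤ ν) {R : ℝ} (hR : 1 ≤ R) {y : ℝ} (hy : |y| ≤ R)
    (m : ℕ) :
    ‖c ν m * ((m : ℝ) * y ^ (m - 1))‖ ≤
      (1 / Real.Gamma (ν + 1)) * ((2 * R) ^ m / (Nat.factorial m : ℝ)) := by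
  have hR0 : (0:ℝ) < R := lt_of_lt_of_le one_pos hR
  have h1 : ‖c ν m * ((m : ℝ) * y ^ (m - 1))‖ = |c ν m| * ((m : ℝ) * |y| ^ (m - 1)) := by
    rw [norm_mul, norm_mul, norm_pow, Real.norm_eq_abs, Real.norm_eq_abs, Real.norm_eq_abs,
      Nat.abs_cast]
  rw [h1]
  have h2 : (m : ℝ) * |y| ^ (m - 1) ≤ (2 * R) ^ m := by
    have hy1 : |y| ^ (m - 1) ≤ R ^ m := by
      calc |y| ^ (m - 1) ≤ R ^ (m - 1) := pow_le_pow_left₀ (abs_nonneg y) hy _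
        _ ≤ R ^ m := pow_le_pow_right₀ hR (Nat.sub_le m 1)
    calc (m : ℝ) * |y| ^ (m - 1) ≤ (2 : ℝ) ^ m * R ^ m := by
          apply mul_le_mul (m_le_two_pow m) hy1 (by positivity) (by positivity)
      _ = (2 * R) ^ m := (mul_pow 2 R m).symm
  calc |c ν m| * ((m : ℝ) * |y| ^ (m - 1))
      ≤ ((1 / Real.Gamma (ν + 1)) / (Nat.factorial m : ℝ)) * (2 * R) ^ m := by
        apply mul_le_mul (abs_c_le hν m) h2 (by positivity)
        have := Real.Gamma_pos_of_pos (show (0:ℝ) < ν + 1 by linarith)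
        positivity
    _ = (1 / Real.Gamma (ν + 1)) * ((2 * R) ^ m / (Nat.factorial m : ℝ)) := by ring

lemma c_succ {ν : ℝ} (hν : 0 ≤ ν) (m : ℕ) :
    c ν (m + 1) * ((m : ℝ) + 1) = - c (ν + 1) m := by
  have hΓ := gamma_pos hν m
  have harg : (((m + 1 : ℕ) : ℝ) + ν + 1) = ((m : ℝ) + ν + 1) + 1 := by push_cast; ring
  have hg : Real.Gamma (((m + 1 : ℕ) : ℝ) + ν + 1)
      = ((m : ℝ) + ν + 1) * Real.Gamma ((m : ℝ) + ν + 1) := by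
    rw [harg, Real.Gamma_add_one (by positivity)]
  have harg2 : ((m : ℝ) + (ν + 1) + 1) = ((m : ℝ) + ν + 1) + 1 := by ring
  have hg2 : Real.Gamma ((m : ℝ) + (ν + 1) + 1)
      = ((m : ℝ) + ν + 1) * Real.Gamma ((m : ℝ) + ν + 1) := by
    rw [harg2, Real.Gamma_add_one (by positivity)]
  rw [c, c, hg, hg2]
  have hfl : ((Nat.factorial (m + 1) : ℝ)) = ((m : ℝ) + 1) * (Nat.factorial m : ℝ) := by
    push_cast [Nat.factorial_succ]; ring
  rw [hfl, pow_succ]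
  have hf : ((Nat.factorial m : ℝ)) ≠ 0 := by positivity
  have hm1 : ((m : ℝ) + 1) ≠ 0 := by positivity
  have hma : ((m : ℝ) + ν + 1) ≠ 0 := by positivity
  field_simp

lemma hasDerivAt_H {ν : ℝ} (hν : 0 ≤ ν) (x : ℝ) :
    HasDerivAt (H ν) (-(H (ν + 1) x)) x := by
  set R : ℝ := |x| + 1 with hR
  have hR1 : (1:ℝ) ≤ R := by rw [hR]; nlinarith [abs_nonneg x]
  have hmem : x ∈ Set.Ioo (-R) R := by
    rw [Set.mem_Ioo]
    refine ⟨by nlinarith [neg_abs_le x], by nlinarith [le_abs_self x]⟩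
  have key : HasDerivAt (H ν) (∑' m : ℕ, c ν m * ((m : ℝ) * x ^ (m - 1))) x := by
    apply hasDerivAt_tsum_of_isPreconnected (summable_mH hν hR1) isOpen_Ioo
      (convex_Ioo _ _).isPreconnected
      (g := fun (m : ℕ) y => c ν m * y ^ m)
      (g' := fun (m : ℕ) y => c ν m * ((m : ℝ) * y ^ (m - 1)))
      (fun m y _ => (hasDerivAt_pow m y).const_mul (c ν m))
      (fun m y hy => deriv_term_bound hν hR1 (by
        rw [Set.mem_Ioo] at hy; rw [abs_le]; constructor <;> linarith) m)
      hmem (summable_H hν x) hmem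
  have hsum : Summable (fun m : ℕ => c ν m * ((m : ℝ) * x ^ (m - 1))) := by
    apply Summable.of_norm_bounded (summable_mH hν hR1)
    intro m
    exact deriv_term_bound hν hR1 (by rw [abs_le]; constructor <;> nlinarith [abs_nonneg x, le_abs_self x, neg_abs_le x]) m
  have heq : (∑' m : ℕ, c ν m * ((m : ℝ) * x ^ (m - 1))) = -(H (ν + 1) x) := by
    rw [Summable.tsum_eq_zero_add hsum]
    simp only [Nat.cast_zero, zero_mul, mul_zero, zero_add]
    have : ∀ m : ℕ, c ν (m + 1) * (((m + 1 : ℕ) : ℝ) * x ^ ((m + 1) - 1))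
        = -(c (ν + 1) m * x ^ m) := by
      intro m
      have h1 : ((m + 1) - 1 : ℕ) = m := rfl
      rw [h1]
      push_cast
      rw [show c ν (m + 1) * (((m : ℝ) + 1) * x ^ m) = (c ν (m + 1) * ((m : ℝ) + 1)) * x ^ m by ring,
        c_succ hν m]
      ring
    rw [tsum_congr this, tsum_neg]
    rfl
  rwa [heq] at key


lemma differentiable_H {ν : ℝ} (hν : 0 ≤ ν) : Differentiable ℝ (H ν) :=
  fun x => (hasDerivAt_H hν x).differentiableAt

lemma continuous_H {ν : ℝ} (hν : 0 ≤ ν) : Continuous (H ν) :=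
  (differentiable_H hν).continuous

lemma H_zero {ν : ℝ} (hν : 0 ≤ ν) : H ν 0 = 1 / Real.Gamma (ν + 1) := by
  rw [H, tsum_eq_single 0 (by intro m hm; simp [zero_pow hm])]
  simp [c]

lemma H_zero_pos {ν : ℝ} (hν : 0 ≤ ν) : 0 < H ν 0 := by
  rw [H_zero hν]
  have := Real.Gamma_pos_of_pos (show (0:ℝ) < ν + 1 by linarith)
  positivity

lemma c_rec {ν : ℝ} (hν : 0 ≤ ν) (m : ℕ) :
    c ν m = ((m : ℝ) + ν + 1) * c (ν + 1) m := by
  have hΓ := gamma_pos hν m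
  have harg2 : ((m : ℝ) + (ν + 1) + 1) = ((m : ℝ) + ν + 1) + 1 := by ring
  have hg2 : Real.Gamma ((m : ℝ) + (ν + 1) + 1)
      = ((m : ℝ) + ν + 1) * Real.Gamma ((m : ℝ) + ν + 1) := by
    rw [harg2, Real.Gamma_add_one (by positivity)]
  rw [c, c, hg2]
  have hf : ((Nat.factorial m : ℝ)) ≠ 0 := by positivity
  have hma : ((m : ℝ) + ν + 1) ≠ 0 := by positivity
  field_simp

lemma summable_mc {ν : ℝ} (hν : 0 ≤ ν) (x : ℝ) :
    Summable (fun m : ℕ => (m : ℝ) * c ν m * x ^ m) := by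
  set R : ℝ := |x| + 1 with hR
  have hR1 : (1:ℝ) ≤ R := by rw [hR]; nlinarith [abs_nonneg x]
  apply Summable.of_norm_bounded (summable_mH hν hR1)
  intro m
  have h1 : ‖(m : ℝ) * c ν m * x ^ m‖ = |c ν m| * ((m : ℝ) * |x| ^ m) := by
    rw [norm_mul, norm_mul, norm_pow, Real.norm_eq_abs, Real.norm_eq_abs, Real.norm_eq_abs,
      Nat.abs_cast]
    ring
  rw [h1]
  have h2 : (m : ℝ) * |x| ^ m ≤ (2 * R) ^ m := by
    calc (m : ℝ) * |x| ^ m ≤ (2 : ℝ) ^ m * R ^ m := by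
          apply mul_le_mul (m_le_two_pow m) (pow_le_pow_left₀ (abs_nonneg x) (by rw [hR]; linarith) m)
            (by positivity) (by positivity)
      _ = (2 * R) ^ m := (mul_pow 2 R m).symm
  have hΓν := Real.Gamma_pos_of_pos (show (0:ℝ) < ν + 1 by linarith)
  calc |c ν m| * ((m : ℝ) * |x| ^ m)
      ≤ ((1 / Real.Gamma (ν + 1)) / (Nat.factorial m : ℝ)) * (2 * R) ^ m :=
        mul_le_mul (abs_c_le hν m) h2 (by positivity) (by positivity)
    _ = (1 / Real.Gamma (ν + 1)) * ((2 * R) ^ m / (Nat.factorial m : ℝ)) := by ring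

lemma tsum_mc {ν : ℝ} (hν : 0 ≤ ν) (x : ℝ) :
    ∑' m : ℕ, (m : ℝ) * c ν m * x ^ m = -(x * H (ν + 1) x) := by
  rw [Summable.tsum_eq_zero_add (summable_mc hν x)]
  simp only [Nat.cast_zero, zero_mul, zero_add]
  have key : ∀ m : ℕ, ((m + 1 : ℕ) : ℝ) * c ν (m + 1) * x ^ (m + 1)
      = -(x * (c (ν + 1) m * x ^ m)) := by
    intro m
    push_cast
    rw [show ((m : ℝ) + 1) * c ν (m + 1) * x ^ (m + 1)
        = (c ν (m + 1) * ((m : ℝ) + 1)) * x ^ (m + 1) by ring, c_succ hν m]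
    ring
  rw [tsum_congr key, tsum_neg, tsum_mul_left, H]

lemma H_recurrence {ν : ℝ} (hν : 0 ≤ ν) (x : ℝ) :
    H ν x = (ν + 1) * H (ν + 1) x - x * H (ν + 2) x := by
  have key : ∀ m : ℕ, c ν m * x ^ m
      = (ν + 1) * (c (ν + 1) m * x ^ m) + (m : ℝ) * c (ν + 1) m * x ^ m := by
    intro m
    rw [c_rec hν m]
    ring
  have hs1 : Summable (fun m : ℕ => (ν + 1) * (c (ν + 1) m * x ^ m)) :=
    (summable_H (by linarith) x).mul_left _
  have hs2 := summable_mc (show (0:ℝ) ≤ ν + 1 by linarith) x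
  calc H ν x = ∑' m : ℕ, ((ν + 1) * (c (ν + 1) m * x ^ m) + (m : ℝ) * c (ν + 1) m * x ^ m) :=
        tsum_congr key
    _ = (ν + 1) * H (ν + 1) x + ∑' m : ℕ, (m : ℝ) * c (ν + 1) m * x ^ m := by
        rw [Summable.tsum_add hs1 hs2, tsum_mul_left, H]
    _ = (ν + 1) * H (ν + 1) x + -(x * H (ν + 1 + 1) x) := by
        rw [tsum_mc (show (0:ℝ) ≤ ν + 1 by linarith) x]
    _ = (ν + 1) * H (ν + 1) x - x * H (ν + 2) x := by
        rw [show ν + 1 + 1 = ν + 2 by ring]; ring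

lemma H_pos_of_no_zero {ν : ℝ} (hν : 0 ≤ ν) {b : ℝ}
    (hzero : ∀ y, 0 < y → y < b → H ν y ≠ 0) :
    ∀ x, 0 ≤ x → x < b → 0 < H ν x := by
  intro x hx0 hxb
  rcases eq_or_lt_of_le hx0 with h | h
  · rw [← h]; exact H_zero_pos hν
  by_contra hle
  push_neg at hle
  have hlt : H ν x < 0 := lt_of_le_of_ne hle (hzero x h hxb)
  have cont : ContinuousOn (H ν) (Set.Icc 0 x) := (continuous_H hν).continuousOn
  have hsub := intermediate_value_Ioo' (le_of_lt h) cont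
  have h0mem : (0:ℝ) ∈ Set.Ioo (H ν x) (H ν 0) := ⟨hlt, H_zero_pos hν⟩
  obtain ⟨y, hy, hy0⟩ := hsub h0mem
  exact hzero y hy.1 (hy.2.trans hxb) hy0


lemma besselJ_eq_H (ν : ℝ) {t : ℝ} (ht : 0 < t) :
    besselJ ν t = (t / 2) ^ ν * H ν (t ^ 2 / 4) := by
  have h2 : 0 < t / 2 := by linarith
  have key : ∀ m : ℕ, ((-1 : ℝ) ^ m / ((Nat.factorial m) * Real.Gamma ((m : ℝ) + ν + 1))) *
      (t / 2) ^ (2 * (m : ℝ) + ν) = (t / 2) ^ ν * (c ν m * (t ^ 2 / 4) ^ m) := by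
    intro m
    have e1 : (t / 2 : ℝ) ^ (2 * (m : ℝ) + ν) = (t ^ 2 / 4) ^ m * (t / 2) ^ ν := by
      rw [Real.rpow_add h2]
      congr 1
      rw [show (2 * (m : ℝ)) = ((2 * m : ℕ) : ℝ) by push_cast; ring, Real.rpow_natCast, pow_mul]
      congr 1
      ring
    rw [e1, c]
    ring
  rw [besselJ, tsum_congr key, tsum_mul_left, H]

end BesselAux

open BesselAux in
/-- for every `α ≥ 1`, writing `Ω_α(t) = Γ(α+1)·(2/t)^α·J_α(t)`,
the global minimum `Ω_α(j_{α+1})` of `Ω_α` is at least the global minimum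
`Ω_{α-1}(j_α)` of `Ω_{α-1}`, where `j_ν` denotes the smallest positive zero of
the Bessel function `J_ν`. -/
theorem bessel_omega_min_monotone
    (α : ℝ) (hα : 1 ≤ α) (ja jb : ℝ)
    (hja : IsLeast {t : ℝ | 0 < t ∧ besselJ α t = 0} ja)
    (hjb : IsLeast {t : ℝ | 0 < t ∧ besselJ (α + 1) t = 0} jb) :
    Real.Gamma α * (2 / ja) ^ (α - 1) * besselJ (α - 1) ja ≤
      Real.Gamma (α + 1) * (2 / jb) ^ α * besselJ α jb := by
  obtain ⟨⟨hja_pos, hja_zero⟩, hja_least⟩ := hja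
  obtain ⟨⟨hjb_pos, hjb_zero⟩, hjb_least⟩ := hjb
  have hα0 : (0:ℝ) ≤ α - 1 := by linarith
  have hα1 : (0:ℝ) ≤ α := by linarith
  have hα2 : (0:ℝ) ≤ α + 1 := by linarith
  set a := ja ^ 2 / 4 with ha_def
  set b := jb ^ 2 / 4 with hb_def
  have ha_pos : 0 < a := by positivity
  have hb_pos : 0 < b := by positivity
  have hHa : H α a = 0 := by
    have h := hja_zero
    rw [besselJ_eq_H α hja_pos] at h
    have hp : (0:ℝ) < (ja / 2) ^ α := Real.rpow_pos_of_pos (by linarith) α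
    rcases mul_eq_zero.mp h with h' | h'
    · exact absurd h' hp.ne'
    · exact h'
  have hHb : H (α + 1) b = 0 := by
    have h := hjb_zero
    rw [besselJ_eq_H (α + 1) hjb_pos] at h
    have hp : (0:ℝ) < (jb / 2) ^ (α + 1) := Real.rpow_pos_of_pos (by linarith) (α + 1)
    rcases mul_eq_zero.mp h with h' | h'
    · exact absurd h' hp.ne'
    · exact h'
  have hano : ∀ y, 0 < y → y < a → H α y ≠ 0 := by
    intro y hy hlt hzero
    have hsq : 0 < Real.sqrt y := Real.sqrt_pos.mpr hy
    set s := 2 * Real.sqrt y with hs_def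
    have hs_pos : 0 < s := by positivity
    have hsy : s ^ 2 / 4 = y := by
      rw [hs_def, mul_pow, Real.sq_sqrt hy.le]; ring
    have hBs : besselJ α s = 0 := by
      rw [besselJ_eq_H α hs_pos, hsy, hzero, mul_zero]
    have hle : ja ≤ s := hja_least ⟨hs_pos, hBs⟩
    have hya : a ≤ y := by
      rw [ha_def, ← hsy]
      nlinarith
    linarith
  have hbno : ∀ y, 0 < y → y < b → H (α + 1) y ≠ 0 := by
    intro y hy hlt hzero
    have hsq : 0 < Real.sqrt y := Real.sqrt_pos.mpr hy
    set s := 2 * Real.sqrt y with hs_def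
    have hs_pos : 0 < s := by positivity
    have hsy : s ^ 2 / 4 = y := by
      rw [hs_def, mul_pow, Real.sq_sqrt hy.le]; ring
    have hBs : besselJ (α + 1) s = 0 := by
      rw [besselJ_eq_H (α + 1) hs_pos, hsy, hzero, mul_zero]
    have hle : jb ≤ s := hjb_least ⟨hs_pos, hBs⟩
    have hyb : b ≤ y := by
      rw [hb_def, ← hsy]
      nlinarith
    linarith
  have hHa_posOn := H_pos_of_no_zero hα1 hano
  have hHb_posOn := H_pos_of_no_zero hα2 hbno
  -- Step A : a ≤ b
  have hab : a ≤ b := by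
    by_contra hba
    push_neg at hba
    set G := fun x : ℝ => x ^ (α + 1) * H (α + 1) x with hG
    have hcont : ContinuousOn G (Set.Icc 0 b) := by
      apply ContinuousOn.mul
      · intro x _
        exact (Real.continuousAt_rpow_const x (α + 1) (Or.inr (by linarith))).continuousWithinAt
      · exact (continuous_H hα2).continuousOn
    have hderiv : ∀ x ∈ interior (Set.Icc (0:ℝ) b), 0 < deriv G x := by
      intro x hx
      rw [interior_Icc] at hx
      obtain ⟨hx0, hxb⟩ := hx
      have hd1 : HasDerivAt (fun x : ℝ => x ^ (α + 1)) ((α + 1) * x ^ α) x := by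
        have h := Real.hasDerivAt_rpow_const (x := x) (p := α + 1) (Or.inl hx0.ne')
        rwa [show α + 1 - 1 = α by ring] at h
      have hd : HasDerivAt G (x ^ α * H α x) x := by
        have h := hd1.mul (hasDerivAt_H hα2 x)
        rw [hG]
        convert h using 1 <;> try rfl
        rw [show α + 1 + 1 = α + 2 by ring,
          show H α x = (α + 1) * H (α + 1) x - x * H (α + 2) x from H_recurrence hα1 x,
          Real.rpow_add_one hx0.ne' α]
        ring
      rw [hd.deriv]
      have h1 : 0 < x ^ α := Real.rpow_pos_of_pos hx0 α
      have h2 : 0 < H α x := hHa_posOn x hx0.le (by linarith)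
      positivity
    have hmono := strictMonoOn_of_deriv_pos (convex_Icc 0 b) hcont hderiv
    have hGb : G 0 < G b :=
      hmono (Set.left_mem_Icc.mpr hb_pos.le) (Set.right_mem_Icc.mpr hb_pos.le) hb_pos
    rw [hG] at hGb
    simp only at hGb
    rw [Real.zero_rpow (by linarith : α + 1 ≠ 0), hHb, zero_mul, mul_zero] at hGb
    exact lt_irrefl 0 hGb
  -- Step B : H α ≤ 0 on [a, b]
  have hHα_anti : AntitoneOn (H α) (Set.Icc 0 b) := by
    apply antitoneOn_of_deriv_nonpos (convex_Icc 0 b) ((continuous_H hα1).continuousOn)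
      ((differentiable_H hα1).differentiableOn)
    intro x hx
    rw [interior_Icc] at hx
    rw [(hasDerivAt_H hα1 x).deriv]
    have := hHb_posOn x hx.1.le hx.2
    linarith
  have hHα_nonpos : ∀ x ∈ Set.Icc a b, H α x ≤ 0 := by
    intro x hx
    have hmem1 : a ∈ Set.Icc (0:ℝ) b := ⟨ha_pos.le, hab⟩
    have hmem2 : x ∈ Set.Icc (0:ℝ) b := ⟨ha_pos.le.trans hx.1, hx.2⟩
    calc H α x ≤ H α a := hHα_anti hmem1 hmem2 hx.1
      _ = 0 := hHa
  -- Step C : H (α-1) monotone on [a, b]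
  have hdF : ∀ x : ℝ, HasDerivAt (H (α - 1)) (-(H α x)) x := by
    intro x
    have h := hasDerivAt_H hα0 x
    rwa [show α - 1 + 1 = α by ring] at h
  have hFmono : MonotoneOn (H (α - 1)) (Set.Icc a b) := by
    apply monotoneOn_of_deriv_nonneg (convex_Icc a b) ((continuous_H hα0).continuousOn)
      ((differentiable_H hα0).differentiableOn)
    intro x hx
    rw [interior_Icc] at hx
    rw [(hdF x).deriv]
    have := hHα_nonpos x ⟨hx.1.le, hx.2.le⟩
    linarith
  have hFab : H (α - 1) a ≤ H (α - 1) b :=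
    hFmono ⟨le_refl a, hab⟩ ⟨hab, le_refl b⟩ hab
  -- recurrence
  have hrec : ∀ x : ℝ, H (α - 1) x = α * H α x - x * H (α + 1) x := by
    intro x
    have h := H_recurrence hα0 x
    rwa [show α - 1 + 1 = α by ring, show α - 1 + 2 = α + 1 by ring] at h
  have hFb : H (α - 1) b = α * H α b := by rw [hrec b, hHb]; ring
  -- final computation
  have hGα : 0 < Real.Gamma α := Real.Gamma_pos_of_pos (by linarith)
  rw [besselJ_eq_H (α - 1) hja_pos, besselJ_eq_H α hjb_pos]
  have hone : ∀ (s p : ℝ), 0 < s → (2 / s) ^ p * ((s / 2) ^ p) = 1 := by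
    intro s p hs
    rw [← Real.mul_rpow (by positivity) (by positivity),
      show (2 / s) * (s / 2) = 1 by field_simp, Real.one_rpow]
  have e1 : Real.Gamma α * (2 / ja) ^ (α - 1) * ((ja / 2) ^ (α - 1) * H (α - 1) a)
      = Real.Gamma α * H (α - 1) a := by
    have h := hone ja (α - 1) hja_pos
    calc Real.Gamma α * (2 / ja) ^ (α - 1) * ((ja / 2) ^ (α - 1) * H (α - 1) a)
        = Real.Gamma α * ((2 / ja) ^ (α - 1) * (ja / 2) ^ (α - 1)) * H (α - 1) a := by ring
      _ = Real.Gamma α * 1 * H (α - 1) a := by rw [h]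
      _ = Real.Gamma α * H (α - 1) a := by ring
  have e2 : Real.Gamma (α + 1) * (2 / jb) ^ α * ((jb / 2) ^ α * H α b)
      = Real.Gamma (α + 1) * H α b := by
    have h := hone jb α hjb_pos
    calc Real.Gamma (α + 1) * (2 / jb) ^ α * ((jb / 2) ^ α * H α b)
        = Real.Gamma (α + 1) * ((2 / jb) ^ α * (jb / 2) ^ α) * H α b := by ring
      _ = Real.Gamma (α + 1) * 1 * H α b := by rw [h]
      _ = Real.Gamma (α + 1) * H α b := by ring
  rw [e1, e2, Real.Gamma_add_one (show α ≠ 0 by linarith)]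
  have e3 : α * Real.Gamma α * H α b = Real.Gamma α * H (α - 1) b := by rw [hFb]; ring
  rw [e3]
  exact mul_le_mul_of_nonneg_left hFab hGα.le
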